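/- Let Q = (t₁,t₂) be the quaternion algebra over R = k[t₁^{±1},t₂^{±1}], and let S ∈ sl₂(Q) be the matrix of the Q-linear endomorphism of V = Q² acting as −1 on the non-free rank-1 projective module W = ker(m) and as +1 on a free complement U, and let P = a·diag(1,−1) with a ∈ k^×. Then S and P are not conjugate by any R-linear Lie algebra automorphism of sl₂(Q). -/

import Mathlib

/-- The ring `R = k[t₁^{±1}, t₂^{±1}]` of Laurent polynomials in two variables. -/
abbrev LaurentR (k : Type*) [Field k] : Type _ := AddMonoidAlgebra k (ℤ × ℤ)

/-- The variable `t₁ ∈ R`. -/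
noncomputable def tOne (k : Type*) [Field k] : LaurentR k :=
  AddMonoidAlgebra.single ((1 : ℤ), (0 : ℤ)) 1

/-- The variable `t₂ ∈ R`. -/
noncomputable def tTwo (k : Type*) [Field k] : LaurentR k :=
  AddMonoidAlgebra.single ((0 : ℤ), (1 : ℤ)) 1

/-- The map `m : Q ⊕ Q → Q` of right `Q`-modules, `(u,v) ↦ (1+i)u − (1+j)v`. -/
noncomputable def mMap (Q : Type*) [Ring Q] (i j : Q) : (Q × Q) →ₗ[Qᵐᵒᵖ] Q where
  toFun x := (1 + i) * x.1 - (1 + j) * x.2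
  map_add' x y := by
    simp only [Prod.fst_add, Prod.snd_add, mul_add]
    abel
  map_smul' q x := by
    simp only [Prod.smul_fst, Prod.smul_snd, MulOpposite.smul_eq_mul_unop,
      RingHom.id_apply, mul_assoc, sub_mul]

attribute [local instance 100] LieRing.ofAssociativeRing

/-- A `2×2` matrix over `Q` acts on `Q × Q` (column vectors) by left multiplication;
this is an endomorphism of the right `Q`-module `Q × Q`. -/
noncomputable def SPtoEnd {Q : Type*} [Ring Q] (M : Matrix (Fin 2) (Fin 2) Q) :
    (Q × Q) →ₗ[Qᵐᵒᵖ] (Q × Q) where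
  toFun x := (M 0 0 * x.1 + M 0 1 * x.2, M 1 0 * x.1 + M 1 1 * x.2)
  map_add' x y := by
    simp only [Prod.fst_add, Prod.snd_add, mul_add, Prod.mk_add_mk, Prod.mk.injEq]
    constructor <;> abel
  map_smul' q x := by
    simp only [Prod.smul_fst, Prod.smul_snd, MulOpposite.smul_eq_mul_unop, Prod.smul_mk,
      RingHom.id_apply, Prod.mk.injEq, add_mul, mul_assoc]

theorem SPtoEnd_apply {Q : Type*} [Ring Q] (M : Matrix (Fin 2) (Fin 2) Q) (x : Q × Q) :
    SPtoEnd M x = (M 0 0 * x.1 + M 0 1 * x.2, M 1 0 * x.1 + M 1 1 * x.2) := rfl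

theorem SPtoEnd_mul {Q : Type*} [Ring Q] (M N : Matrix (Fin 2) (Fin 2) Q) (x : Q × Q) :
    SPtoEnd (M * N) x = SPtoEnd M (SPtoEnd N x) := by
  simp only [SPtoEnd_apply, Matrix.mul_apply, Fin.sum_univ_two, Prod.mk.injEq, add_mul,
    mul_add, mul_assoc]
  constructor <;> abel

theorem SPtoEnd_sub {Q : Type*} [Ring Q] (M N : Matrix (Fin 2) (Fin 2) Q) (x : Q × Q) :
    SPtoEnd (M - N) x = SPtoEnd M x - SPtoEnd N x := by
  simp only [SPtoEnd_apply, Matrix.sub_apply, sub_mul, Prod.mk_sub_mk, Prod.mk.injEq]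
  constructor <;> abel

theorem SPtoEnd_smul {Q R : Type*} [Ring Q] [CommRing R] [Algebra R Q] (c : R)
    (M : Matrix (Fin 2) (Fin 2) Q) (x : Q × Q) :
    SPtoEnd (c • M) x = c • SPtoEnd M x := by
  simp only [SPtoEnd_apply, Matrix.smul_apply, smul_mul_assoc, Prod.smul_mk, smul_add]

/-- `Q` is free as a right module over itself. -/
noncomputable def SPopSelfEquiv (Q : Type*) [Ring Q] : Qᵐᵒᵖ ≃ₗ[Qᵐᵒᵖ] Q where
  toFun := MulOpposite.unop
  invFun := MulOpposite.op
  map_add' _ _ := rfl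
  map_smul' _ _ := rfl
  left_inv _ := rfl
  right_inv _ := rfl

/-- Let `Q = (t₁,t₂)` be the quaternion algebra over `R = k[t₁^{±1},t₂^{±1}]`, let
`S ∈ sl₂(Q)` be the matrix of the `Q`-linear endomorphism of `V = Q²` acting as `−1` on
the non-free rank-one projective module `W = ker(m)` and as `+1` on a free complement `U`,
and let `P = a·diag(1,−1)` with `a ∈ k^×`.  Then `S` and `P` are not conjugate by any
`R`-linear Lie algebra automorphism of `sl₂(Q) = [gl₂(Q), gl₂(Q)]`. -/
theorem S_P_not_R_conjugate
    (k : Type*) [Field k] [IsAlgClosed k] [CharZero k]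
    (Q : Type*) [Ring Q] [Algebra (LaurentR k) Q]
    [Algebra k Q] [IsScalarTower k (LaurentR k) Q]
    (i j : Q)
    (hi : i * i = algebraMap (LaurentR k) Q (tOne k))
    (hj : j * j = algebraMap (LaurentR k) Q (tTwo k))
    (hij : i * j = -(j * i))
    (bQ : Module.Basis (Fin 4) (LaurentR k) Q)
    (hb0 : bQ 0 = 1) (hb1 : bQ 1 = i) (hb2 : bQ 2 = j) (hb3 : bQ 3 = i * j)
    -- `W = ker m` is not free, `U` is a complement of `W`:
    (hWnotfree : ¬ Module.Free Qᵐᵒᵖ (LinearMap.ker (mMap Q i j)))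
    (U : Submodule Qᵐᵒᵖ (Q × Q))
    (hWU : IsCompl (LinearMap.ker (mMap Q i j)) U)
    -- `s` acts as `−1` on `W`, `+1` on `U`, with matrix `S`:
    (s : (Q × Q) →ₗ[Qᵐᵒᵖ] (Q × Q))
    (hsW : ∀ w ∈ LinearMap.ker (mMap Q i j), s w = -w)
    (hsU : ∀ u ∈ U, s u = u)
    (S : Matrix (Fin 2) (Fin 2) Q)
    (hSmat : ∀ u v : Q, s (u, v) = (S 0 0 * u + S 0 1 * v, S 1 0 * u + S 1 1 * v))
    -- `P = a · diag(1,−1)` with `a ∈ k^×`: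
    (a : k) (ha : a ≠ 0)
    (P : Matrix (Fin 2) (Fin 2) Q)
    (hPmat : P = !![algebraMap k Q a, 0; 0, -(algebraMap k Q a)])
    (hS : S ∈ LieAlgebra.derivedSeries (LaurentR k) (Matrix (Fin 2) (Fin 2) Q) 1)
    (hP : P ∈ LieAlgebra.derivedSeries (LaurentR k) (Matrix (Fin 2) (Fin 2) Q) 1) :
    ∀ φ : (LieAlgebra.derivedSeries (LaurentR k) (Matrix (Fin 2) (Fin 2) Q) 1) ≃ₗ⁅LaurentR k⁆
          (LieAlgebra.derivedSeries (LaurentR k) (Matrix (Fin 2) (Fin 2) Q) 1),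
      φ ⟨P, hP⟩ ≠ ⟨S, hS⟩ := by
  intro φ hφ
  classical
  set α : Q := algebraMap k Q a with hα
  -- ### Step 0: auxiliary matrices and membership in the derived algebra
  have hder : LieAlgebra.derivedSeries (LaurentR k) (Matrix (Fin 2) (Fin 2) Q) 1
      = ⁅(⊤ : LieIdeal (LaurentR k) (Matrix (Fin 2) (Fin 2) Q)), ⊤⁆ := by
    rw [LieAlgebra.derivedSeries_def, LieAlgebra.derivedSeriesOfIdeal_succ,
      LieAlgebra.derivedSeriesOfIdeal_zero]
  have he₀ : (!![0, α; 0, 0] : Matrix (Fin 2) (Fin 2) Q)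
      ∈ LieAlgebra.derivedSeries (LaurentR k) (Matrix (Fin 2) (Fin 2) Q) 1 := by
    rw [hder]
    have h : (!![0, α; 0, 0] : Matrix (Fin 2) (Fin 2) Q)
        = ⁅(!![α, 0; 0, 0] : Matrix (Fin 2) (Fin 2) Q), !![0, 1; 0, 0]⁆ := by
      ext i' j'
      fin_cases i' <;> fin_cases j' <;>
        simp [Ring.lie_def, Matrix.mul_apply, Fin.sum_univ_two]
    rw [h]
    exact LieSubmodule.lie_mem_lie (LieSubmodule.mem_top _) (LieSubmodule.mem_top _)
  have hf₀ : (!![0, 0; 1, 0] : Matrix (Fin 2) (Fin 2) Q)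
      ∈ LieAlgebra.derivedSeries (LaurentR k) (Matrix (Fin 2) (Fin 2) Q) 1 := by
    rw [hder]
    have h : (!![0, 0; 1, 0] : Matrix (Fin 2) (Fin 2) Q)
        = ⁅(!![0, 0; 1, 0] : Matrix (Fin 2) (Fin 2) Q), !![1, 0; 0, 0]⁆ := by
      ext i' j'
      fin_cases i' <;> fin_cases j' <;>
        simp [Ring.lie_def, Matrix.mul_apply, Fin.sum_univ_two]
    rw [h]
    exact LieSubmodule.lie_mem_lie (LieSubmodule.mem_top _) (LieSubmodule.mem_top _)
  -- ### Step 1: the sl₂-triple relations on the `P` side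
  have hsmul : ∀ (b : k) (x : Q), (algebraMap k (LaurentR k) b) • x = algebraMap k Q b * x := by
    intro b x
    rw [algebraMap_smul, Algebra.smul_def]
  have h2a : ∀ x : Q, algebraMap k (LaurentR k) (2*a) • x = α * x + α * x := by
    intro x
    rw [hsmul, map_mul, map_ofNat, two_mul, add_mul]
  have hm2a : ∀ x : Q, algebraMap k (LaurentR k) (-(2*a)) • x = -(α * x + α * x) := by
    intro x
    rw [hsmul, map_neg, neg_mul, map_mul, map_ofNat, two_mul, add_mul]
  have rel1 : ⁅P, (!![0, α; 0, 0] : Matrix (Fin 2) (Fin 2) Q)⁆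
      = algebraMap k (LaurentR k) (2*a) • (!![0, α; 0, 0] : Matrix (Fin 2) (Fin 2) Q) := by
    rw [hPmat]
    generalize hc : algebraMap k (LaurentR k) (2*a) = c
    ext i' j'
    fin_cases i' <;> fin_cases j' <;>
        simp [Ring.lie_def, Matrix.mul_apply, Fin.sum_univ_two] <;>
      rw [← hc, h2a]
  have rel2 : ⁅P, (!![0, 0; 1, 0] : Matrix (Fin 2) (Fin 2) Q)⁆
      = algebraMap k (LaurentR k) (-(2*a)) • (!![0, 0; 1, 0] : Matrix (Fin 2) (Fin 2) Q) := by
    rw [hPmat]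
    generalize hc : algebraMap k (LaurentR k) (-(2*a)) = c
    ext i' j'
    fin_cases i' <;> fin_cases j' <;>
        simp [Ring.lie_def, Matrix.mul_apply, Fin.sum_univ_two] <;>
      (rw [← hc, hm2a]; simp [mul_one]) <;> abel
  have rel3 : ⁅(!![0, α; 0, 0] : Matrix (Fin 2) (Fin 2) Q),
      (!![0, 0; 1, 0] : Matrix (Fin 2) (Fin 2) Q)⁆ = P := by
    rw [hPmat]
    ext i' j'
    fin_cases i' <;> fin_cases j' <;>
      simp [Ring.lie_def, Matrix.mul_apply, Fin.sum_univ_two]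
  -- ### Step 2: transport through `φ`, obtaining matrices `E`, `F`
  obtain ⟨E, F, mrel1, mrel2, mrel3⟩ :
      ∃ E F : Matrix (Fin 2) (Fin 2) Q,
        ⁅S, E⁆ = algebraMap k (LaurentR k) (2*a) • E ∧
        ⁅S, F⁆ = algebraMap k (LaurentR k) (-(2*a)) • F ∧
        ⁅E, F⁆ = S := by
    have transport : ∀ (x : Matrix (Fin 2) (Fin 2) Q)
        (hx : x ∈ LieAlgebra.derivedSeries (LaurentR k) (Matrix (Fin 2) (Fin 2) Q) 1)
        (c : LaurentR k), ⁅P, x⁆ = c • x →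
        ⁅S, ((φ ⟨x, hx⟩ : LieAlgebra.derivedSeries (LaurentR k)
            (Matrix (Fin 2) (Fin 2) Q) 1) : Matrix (Fin 2) (Fin 2) Q)⁆
          = c • ((φ ⟨x, hx⟩ : LieAlgebra.derivedSeries (LaurentR k)
            (Matrix (Fin 2) (Fin 2) Q) 1) : Matrix (Fin 2) (Fin 2) Q) := by
      intro x hx c hrel
      have h1 : (⁅(⟨P, hP⟩ : LieAlgebra.derivedSeries (LaurentR k)
          (Matrix (Fin 2) (Fin 2) Q) 1), ⟨x, hx⟩⁆) = c • (⟨x, hx⟩ :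
          LieAlgebra.derivedSeries (LaurentR k) (Matrix (Fin 2) (Fin 2) Q) 1) :=
        Subtype.ext hrel
      have h2 := congrArg φ h1
      rw [LieEquiv.map_lie, hφ] at h2
      have h3 : φ (c • (⟨x, hx⟩ : LieAlgebra.derivedSeries (LaurentR k)
          (Matrix (Fin 2) (Fin 2) Q) 1)) = c • φ ⟨x, hx⟩ :=
        φ.toLinearEquiv.map_smul c _
      rw [h3] at h2
      exact congrArg Subtype.val h2
    have t3 : (⁅(φ ⟨_, he₀⟩ : LieAlgebra.derivedSeries (LaurentR k)
          (Matrix (Fin 2) (Fin 2) Q) 1), (φ ⟨_, hf₀⟩ : LieAlgebra.derivedSeries (LaurentR k)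
          (Matrix (Fin 2) (Fin 2) Q) 1)⁆) = ⟨S, hS⟩ := by
      have h1 : (⁅(⟨_, he₀⟩ : LieAlgebra.derivedSeries (LaurentR k)
          (Matrix (Fin 2) (Fin 2) Q) 1), ⟨_, hf₀⟩⁆) = (⟨P, hP⟩ :
          LieAlgebra.derivedSeries (LaurentR k) (Matrix (Fin 2) (Fin 2) Q) 1) :=
        Subtype.ext rel3
      have h2 := congrArg φ h1
      rw [LieEquiv.map_lie, hφ] at h2
      exact h2
    exact ⟨_, _, transport _ he₀ _ rel1, transport _ hf₀ _ rel2, congrArg Subtype.val t3⟩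
  -- ### Step 3: pass to endomorphisms of `Q × Q`
  have hsend : ∀ y : Q × Q, s y = SPtoEnd S y := by
    intro y
    obtain ⟨y1, y2⟩ := y
    rw [SPtoEnd_apply]
    exact hSmat y1 y2
  have erel1 : ∀ x : Q × Q, s (SPtoEnd E x) - SPtoEnd E (s x) = (2*a : k) • SPtoEnd E x := by
    intro x
    have h : SPtoEnd (S * E - E * S) x = SPtoEnd (algebraMap k (LaurentR k) (2*a) • E) x := by
      rw [← Ring.lie_def, mrel1]
    rw [SPtoEnd_sub, SPtoEnd_mul, SPtoEnd_mul, SPtoEnd_smul, algebraMap_smul,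
      ← hsend, ← hsend] at h
    exact h
  have erel2 : ∀ x : Q × Q,
      s (SPtoEnd F x) - SPtoEnd F (s x) = (-(2*a) : k) • SPtoEnd F x := by
    intro x
    have h : SPtoEnd (S * F - F * S) x = SPtoEnd (algebraMap k (LaurentR k) (-(2*a)) • F) x := by
      rw [← Ring.lie_def, mrel2]
    rw [SPtoEnd_sub, SPtoEnd_mul, SPtoEnd_mul, SPtoEnd_smul, algebraMap_smul,
      ← hsend, ← hsend] at h
    exact h
  have erel3 : ∀ x : Q × Q, SPtoEnd E (SPtoEnd F x) - SPtoEnd F (SPtoEnd E x) = s x := by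
    intro x
    have h : SPtoEnd (E * F - F * E) x = SPtoEnd S x := by
      rw [← Ring.lie_def, mrel3]
    rw [SPtoEnd_sub, SPtoEnd_mul, SPtoEnd_mul, ← hsend] at h
    exact h
  -- ### Step 4: basic properties of the involution `s`
  have hkop : ∀ (b : k) (y : Q × Q), b • y = (MulOpposite.op (algebraMap k Q b)) • y := by
    intro b y
    obtain ⟨y1, y2⟩ := y
    have hy1 : b • y1 = y1 * algebraMap k Q b := by
      rw [Algebra.smul_def]; exact Algebra.commutes b y1
    have hy2 : b • y2 = y2 * algebraMap k Q b := by
      rw [Algebra.smul_def]; exact Algebra.commutes b y2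
    show (b • y1, b • y2) = (MulOpposite.op (algebraMap k Q b)) • (y1, y2)
    rw [Prod.smul_mk, MulOpposite.smul_eq_mul_unop, MulOpposite.smul_eq_mul_unop,
      MulOpposite.unop_op, hy1, hy2]
  have hkmap : ∀ (g : (Q × Q) →ₗ[Qᵐᵒᵖ] (Q × Q)) (b : k) (y : Q × Q),
      g (b • y) = b • g y := by
    intro g b y
    rw [hkop b y, map_smul, ← hkop]
  have hcancel : ∀ (b : k), b ≠ 0 → ∀ y : Q × Q, b • y = 0 → y = 0 := by
    intro b hb y h
    have h2 := congrArg (fun z => b⁻¹ • z) h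
    simpa [smul_smul, inv_mul_cancel₀ hb] using h2
  have hss : ∀ x : Q × Q, s (s x) = x := by
    intro x
    have hx : x ∈ LinearMap.ker (mMap Q i j) ⊔ U := by
      rw [hWU.sup_eq_top]; trivial
    obtain ⟨w, hw, u, hu, rfl⟩ := Submodule.mem_sup.mp hx
    rw [map_add, hsW w hw, hsU u hu, map_add, map_neg, hsW w hw, hsU u hu, neg_neg]
  have hfix : ∀ x : Q × Q, s x = x → x ∈ U := by
    intro x hx
    have hx' : x ∈ LinearMap.ker (mMap Q i j) ⊔ U := by
      rw [hWU.sup_eq_top]; trivial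
    obtain ⟨w, hw, u, hu, rfl⟩ := Submodule.mem_sup.mp hx'
    rw [map_add, hsW w hw, hsU u hu] at hx
    have hw2 : -w = w := add_right_cancel hx
    have hw0 : w = 0 := by
      have h2 : (2:k) • w = 0 := by
        rw [two_smul]
        nth_rewrite 1 [← hw2]
        abel
      exact hcancel 2 two_ne_zero w h2
    rw [hw0, zero_add]
    exact hu
  have hneg : ∀ x : Q × Q, s x = -x → x ∈ LinearMap.ker (mMap Q i j) := by
    intro x hx
    have hx' : x ∈ LinearMap.ker (mMap Q i j) ⊔ U := by
      rw [hWU.sup_eq_top]; trivial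
    obtain ⟨w, hw, u, hu, rfl⟩ := Submodule.mem_sup.mp hx'
    rw [map_add, hsW w hw, hsU u hu, neg_add] at hx
    have hu2 : u = -u := add_left_cancel hx
    have hu0 : u = 0 := by
      have h2 : (2:k) • u = 0 := by
        rw [two_smul]
        nth_rewrite 2 [hu2]
        abel
      exact hcancel 2 two_ne_zero u h2
    rw [hu0, add_zero]
    exact hw
  -- ### Step 5: eigenvalue computations
  have hsq : ∀ (b : k) (z : Q × Q), s z = b • z → (b * b - 1 : k) • z = 0 := by
    intro b z h
    have h2 : s (s z) = (b * b) • z := by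
      rw [h, hkmap s b z, h, smul_smul]
    rw [hss z] at h2
    rw [sub_smul, one_smul, ← h2, sub_self]
  have hkill : ∀ (b : k) (z : Q × Q), s z = b • z → b * b ≠ 1 → z = 0 := by
    intro b z h hb
    exact hcancel _ (sub_ne_zero.mpr hb) z (hsq b z h)
  have hW1 : ∀ w ∈ LinearMap.ker (mMap Q i j),
      s (SPtoEnd E w) = (2*a - 1 : k) • SPtoEnd E w := by
    intro w hw
    have h := erel1 w
    rw [hsW w hw, map_neg, sub_neg_eq_add] at h
    rw [sub_smul, one_smul]
    exact eq_sub_of_add_eq h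
  have hU1 : ∀ u ∈ U, s (SPtoEnd E u) = (2*a + 1 : k) • SPtoEnd E u := by
    intro u hu
    have h := erel1 u
    rw [hsU u hu] at h
    rw [add_smul, one_smul]
    exact eq_add_of_sub_eq h
  have hW2 : ∀ w ∈ LinearMap.ker (mMap Q i j),
      s (SPtoEnd F w) = (-(2*a) - 1 : k) • SPtoEnd F w := by
    intro w hw
    have h := erel2 w
    rw [hsW w hw, map_neg, sub_neg_eq_add] at h
    rw [sub_smul, one_smul]
    exact eq_sub_of_add_eq h
  have hU2 : ∀ u ∈ U, s (SPtoEnd F u) = (-(2*a) + 1 : k) • SPtoEnd F u := by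
    intro u hu
    have h := erel2 u
    rw [hsU u hu] at h
    rw [add_smul, one_smul]
    exact eq_add_of_sub_eq h
  -- ### Step 6: if `W ≅ U` then `W` is free, which is absurd
  have habsurd : (↥(LinearMap.ker (mMap Q i j)) ≃ₗ[Qᵐᵒᵖ] ↥U) → False := by
    intro e
    have hji : j * i = -(i * j) := by rw [hij, neg_neg]
    have hijij : (i * j) * (i * j) = -(algebraMap (LaurentR k) Q (tOne k * tTwo k)) := by
      have h1 : (i * j) * (i * j) = i * (j * i) * j := by noncomm_ring
      rw [h1, hji]
      have h2 : i * -(i * j) * j = -((i * i) * (j * j)) := by noncomm_ring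
      rw [h2, hi, hj, ← map_mul]
    have hTT : tOne k * tTwo k = AddMonoidAlgebra.single ((1 : ℤ), (1 : ℤ)) (1 : k) := by
      have hidx : ((1 : ℤ), (0 : ℤ)) + ((0 : ℤ), (1 : ℤ)) = ((1 : ℤ), (1 : ℤ)) := by decide
      rw [tOne, tTwo, AddMonoidAlgebra.single_mul_single, hidx, mul_one]
    have hr1 : (AddMonoidAlgebra.single ((-1 : ℤ), (-1 : ℤ)) (-(2:k)⁻¹) : LaurentR k)
        * (tOne k * tTwo k) = AddMonoidAlgebra.single (0 : ℤ × ℤ) (-(2:k)⁻¹) := by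
      have hidx : ((-1 : ℤ), (-1 : ℤ)) + ((1 : ℤ), (1 : ℤ)) = (0 : ℤ × ℤ) := by decide
      rw [hTT, AddMonoidAlgebra.single_mul_single, hidx, mul_one]
    have hsingle0 : algebraMap (LaurentR k) Q
        (AddMonoidAlgebra.single (0 : ℤ × ℤ) (-(2:k)⁻¹)) = algebraMap k Q (-(2:k)⁻¹) := by
      have h1 : (AddMonoidAlgebra.single (0 : ℤ × ℤ) (-(2:k)⁻¹) : LaurentR k)
          = algebraMap k (LaurentR k) (-(2:k)⁻¹) := by
        have := congrFun (AddMonoidAlgebra.coe_algebraMap (R := k) (A := k) (M := ℤ × ℤ))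
          (-(2:k)⁻¹)
        simpa using this.symm
      rw [h1, ← IsScalarTower.algebraMap_apply]
    set r : LaurentR k := AddMonoidAlgebra.single ((-1 : ℤ), (-1 : ℤ)) (-(2:k)⁻¹) with hrdef
    set z : Q := algebraMap (LaurentR k) Q r * (i * j) with hzdef
    have hcomm : (i * j) * (algebraMap (LaurentR k) Q r * (i * j))
        = algebraMap (LaurentR k) Q r * ((i * j) * (i * j)) := by
      rw [← mul_assoc, ← Algebra.commutes r (i * j), mul_assoc]
    have hkey : (1 + i) * ((1 + j) * z) - (1 + j) * ((1 + i) * z) = 1 := by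
      have e1 : (1 + i) * ((1 + j) * z) - (1 + j) * ((1 + i) * z) = (i*j - j*i) * z := by
        noncomm_ring
      rw [e1, hji, sub_neg_eq_add, add_mul, hzdef, hcomm, hijij, mul_neg, ← map_mul, hr1,
        hsingle0]
      have h3 : algebraMap k Q (-(2:k)⁻¹) = -(algebraMap k Q ((2:k)⁻¹)) := by
        rw [map_neg]
      rw [h3, neg_neg, ← map_add]
      have h4 : ((2:k)⁻¹ + (2:k)⁻¹ : k) = 1 := by norm_num
      rw [h4, map_one]
    have hsurj : Function.Surjective (mMap Q i j) := by
      intro q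
      refine ⟨((1 + j) * z * q, (1 + i) * z * q), ?_⟩
      show (1 + i) * ((1 + j) * z * q) - (1 + j) * ((1 + i) * z * q) = q
      calc (1 + i) * ((1 + j) * z * q) - (1 + j) * ((1 + i) * z * q)
          = ((1 + i) * ((1 + j) * z) - (1 + j) * ((1 + i) * z)) * q := by noncomm_ring
        _ = 1 * q := by rw [hkey]
        _ = q := one_mul q
    haveI hfreeQ : Module.Free Qᵐᵒᵖ Q := Module.Free.of_equiv (SPopSelfEquiv Q)
    have efinal : ↥(LinearMap.ker (mMap Q i j)) ≃ₗ[Qᵐᵒᵖ] Q :=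
      e.trans ((Submodule.quotientEquivOfIsCompl _ _ hWU).symm.trans
        (LinearMap.quotKerEquivOfSurjective _ hsurj))
    exact hWnotfree (Module.Free.of_equiv' hfreeQ efinal.symm)
  -- ### Step 7: case analysis on `a`
  by_cases hA : a = 1
  · subst hA
    have hEW : ∀ w ∈ LinearMap.ker (mMap Q i j), SPtoEnd E w ∈ U := by
      intro w hw
      refine hfix _ ?_
      rw [hW1 w hw]
      norm_num
    have hEU : ∀ u ∈ U, SPtoEnd E u = 0 := by
      intro u hu
      refine hkill (2*1+1 : k) _ (hU1 u hu) (by norm_num)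
    have hFW : ∀ w ∈ LinearMap.ker (mMap Q i j), SPtoEnd F w = 0 := by
      intro w hw
      refine hkill (-(2*1)-1 : k) _ (hW2 w hw) (by norm_num)
    have hFU : ∀ u ∈ U, SPtoEnd F u ∈ LinearMap.ker (mMap Q i j) := by
      intro u hu
      refine hneg _ ?_
      rw [hU2 u hu]
      have hc : (-(2*(1:k)) + 1 : k) = -1 := by norm_num
      rw [hc, neg_one_smul]
    have hinv1 : ∀ w ∈ LinearMap.ker (mMap Q i j), SPtoEnd F (SPtoEnd E w) = w := by
      intro w hw
      have h := erel3 w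
      rw [hFW w hw, map_zero, hsW w hw, zero_sub] at h
      exact neg_injective h
    have hinv2 : ∀ u ∈ U, SPtoEnd E (SPtoEnd F u) = u := by
      intro u hu
      have h := erel3 u
      rw [hEU u hu, map_zero, hsU u hu, sub_zero] at h
      exact h
    refine habsurd ?_
    refine
      { toFun := fun w => ⟨SPtoEnd E w, hEW w w.2⟩
        map_add' := fun x y => Subtype.ext ?_
        map_smul' := fun q x => Subtype.ext ?_
        invFun := fun u => ⟨SPtoEnd F u, hFU u u.2⟩
        left_inv := fun w => Subtype.ext (hinv1 w w.2)
        right_inv := fun u => Subtype.ext (hinv2 u u.2) }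
    · show SPtoEnd E ((x + y : ↥(LinearMap.ker (mMap Q i j))) : Q × Q)
        = SPtoEnd E x + SPtoEnd E y
      rw [Submodule.coe_add, map_add]
    · show SPtoEnd E ((q • x : ↥(LinearMap.ker (mMap Q i j))) : Q × Q) = q • SPtoEnd E x
      rw [Submodule.coe_smul, map_smul]
  · by_cases hA' : a = -1
    · subst hA'
      have hEW : ∀ w ∈ LinearMap.ker (mMap Q i j), SPtoEnd E w = 0 := by
        intro w hw
        refine hkill (2*(-1)-1 : k) _ (hW1 w hw) (by norm_num)
      have hEU : ∀ u ∈ U, SPtoEnd E u ∈ LinearMap.ker (mMap Q i j) := by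
        intro u hu
        refine hneg _ ?_
        rw [hU1 u hu]
        have hc : (2*(-1:k) + 1 : k) = -1 := by norm_num
        rw [hc, neg_one_smul]
      have hFW : ∀ w ∈ LinearMap.ker (mMap Q i j), SPtoEnd F w ∈ U := by
        intro w hw
        refine hfix _ ?_
        rw [hW2 w hw]
        norm_num
      have hFU : ∀ u ∈ U, SPtoEnd F u = 0 := by
        intro u hu
        refine hkill (-(2*(-1))+1 : k) _ (hU2 u hu) (by norm_num)
      have hinv1 : ∀ w ∈ LinearMap.ker (mMap Q i j), SPtoEnd E (SPtoEnd F w) = -w := by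
        intro w hw
        have h := erel3 w
        rw [hEW w hw, map_zero, sub_zero, hsW w hw] at h
        exact h
      have hinv2 : ∀ u ∈ U, SPtoEnd F (SPtoEnd E u) = -u := by
        intro u hu
        have h := erel3 u
        rw [hFU u hu, map_zero, zero_sub, hsU u hu] at h
        exact neg_eq_iff_eq_neg.mp h
      refine habsurd ?_
      refine
        { toFun := fun w => ⟨SPtoEnd F w, hFW w w.2⟩
          map_add' := fun x y => Subtype.ext ?_
          map_smul' := fun q x => Subtype.ext ?_
          invFun := fun u => ⟨-(SPtoEnd E u), neg_mem (hEU u u.2)⟩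
          left_inv := fun w => Subtype.ext ?_
          right_inv := fun u => Subtype.ext ?_ }
      · show SPtoEnd F ((x + y : ↥(LinearMap.ker (mMap Q i j))) : Q × Q)
          = SPtoEnd F x + SPtoEnd F y
        rw [Submodule.coe_add, map_add]
      · show SPtoEnd F ((q • x : ↥(LinearMap.ker (mMap Q i j))) : Q × Q) = q • SPtoEnd F x
        rw [Submodule.coe_smul, map_smul]
      · show -(SPtoEnd E (SPtoEnd F w)) = w
        rw [hinv1 w w.2, neg_neg]
      · show SPtoEnd F (-(SPtoEnd E u)) = u
        rw [map_neg, hinv2 u u.2, neg_neg]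
    · -- generic case: both eigen-coefficients kill, so `W = 0`
      have hc1 : ((2*a - 1) * (2*a - 1) : k) ≠ 1 := by
        intro hcon
        have h4 : (4*a) * (a - 1) = 0 := by linear_combination hcon
        rcases mul_eq_zero.mp h4 with h | h
        · exact ha ((mul_eq_zero.mp h).resolve_left (by norm_num))
        · exact hA (sub_eq_zero.mp h)
      have hc2 : ((-(2*a) - 1) * (-(2*a) - 1) : k) ≠ 1 := by
        intro hcon
        have h4 : (4*a) * (a + 1) = 0 := by linear_combination hcon
        rcases mul_eq_zero.mp h4 with h | h
        · exact ha ((mul_eq_zero.mp h).resolve_left (by norm_num))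
        · exact hA' (eq_neg_of_add_eq_zero_left h)
      have hE0 : ∀ w ∈ LinearMap.ker (mMap Q i j), SPtoEnd E w = 0 := fun w hw =>
        hkill _ _ (hW1 w hw) hc1
      have hF0 : ∀ w ∈ LinearMap.ker (mMap Q i j), SPtoEnd F w = 0 := fun w hw =>
        hkill _ _ (hW2 w hw) hc2
      haveI : Subsingleton ↥(LinearMap.ker (mMap Q i j)) := by
        refine ⟨fun x y => Subtype.ext ?_⟩
        have hW0 : ∀ w ∈ LinearMap.ker (mMap Q i j), w = (0 : Q × Q) := by
          intro w hw
          have h := erel3 w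
          rw [hF0 w hw, map_zero, hE0 w hw, map_zero, sub_zero, hsW w hw] at h
          rw [← neg_eq_zero]
          exact h.symm
        rw [hW0 x x.2, hW0 y y.2]
      exact hWnotfree inferInstance
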